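/- Let H be a complex Hilbert space, let C be a positive invertible bounded linear operator on H, and let (f_i)_{i∈ℕ} and (g_i)_{i∈ℕ} be C-controlled Bessel sequences in H, with B > 0 a C-controlled Bessel bound for (g_i). If f = ∑_i ⟪f, f_i⟫ C g_i for every f ∈ H, then (f_i) satisfies the lower controlled-frame inequality: for every f ∈ H, ∑_i ⟪f, f_i⟫ ⟪C f_i, f⟫ ≥ ‖f‖² / (B · ‖C^{-1/2}‖⁴ · ‖C‖²); in particular (f_i) is a C-controlled frame for H. -/

import Mathlib

open scoped InnerProductSpace

set_option maxHeartbeats 1000000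

open scoped InnerProductSpace

open Complex in
private lemma pow_limit_le {a M K c : ℝ} (hM : 0 ≤ M) (hc : 0 < c)
    (h : ∀ n : ℕ, a ^ (2^n) * c ≤ K * M ^ (2^n)) : a ≤ M := by
  by_contra hlt
  push_neg at hlt
  have ha' : 0 < a := hM.trans_lt hlt
  rcases hM.eq_or_lt with hM0 | hM0
  · have h0 := h 0
    simp only [pow_zero, pow_one, ← hM0, mul_one] at h0
    nlinarith
  · have hq : 1 < a / M := (one_lt_div hM0).2 hlt
    obtain ⟨n, hn⟩ := pow_unbounded_of_one_lt (K / c) hq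
    have hn2 : K / c < (a/M)^(2^n) :=
      hn.trans_le (pow_le_pow_right₀ hq.le (Nat.lt_two_pow_self (n := n)).le)
    have hMN : 0 < M ^ (2^n) := pow_pos hM0 _
    rw [div_pow, lt_div_iff₀ hMN] at hn2
    have h3 := mul_lt_mul_of_pos_right hn2 hc
    have h4 : K / c * M ^ (2^n) * c = K * M ^ (2^n) := by field_simp
    have h5 := h n
    nlinarith

open Complex in
private lemma controlled_master {H : Type*} [NormedAddCommGroup H] [InnerProductSpace ℂ H]
    [CompleteSpace H]
    (C : H →L[ℂ] H) (hC : C.IsPositive)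
    (Cinv : H →L[ℂ] H) (hCr : C ∘L Cinv = 1) (hCl : Cinv ∘L C = 1)
    (u : ℕ → H) (Bu : ℝ) (hBu : 0 ≤ Bu)
    (hBes : ∀ x : H, ∃ r : ℝ, 0 ≤ r ∧ r ≤ Bu * ‖x‖ ^ 2 ∧
      HasSum (fun i => ⟪u i, x⟫_ℂ * ⟪x, C (u i)⟫_ℂ) (r : ℂ)) (y : H) :
    ∃ s ρ : ℝ, HasSum (fun i => ‖⟪u i, y⟫_ℂ‖ ^ 2) s ∧
      HasSum (fun i => ⟪u i, y⟫_ℂ * ⟪y, C (u i)⟫_ℂ) ((ρ : ℂ)) ∧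
      0 ≤ ρ ∧ ρ ≤ Bu * ‖y‖ ^ 2 ∧ s ≤ ‖Cinv‖ * ρ := by
  classical
  set ρ : H → ℝ := fun z => (hBes z).choose with hρdef
  have hρ0 : ∀ z, 0 ≤ ρ z := fun z => (hBes z).choose_spec.1
  have hρB : ∀ z, ρ z ≤ Bu * ‖z‖ ^ 2 := fun z => (hBes z).choose_spec.2.1
  have hρS : ∀ z, HasSum (fun i => ⟪u i, z⟫_ℂ * ⟪z, C (u i)⟫_ℂ) ((ρ z : ℂ)) :=
    fun z => (hBes z).choose_spec.2.2
  have hscale : ∀ (c : ℂ), c * (starRingEnd ℂ) c = 1 → ∀ z, ρ (c • z) = ρ z := by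
    intro c hc z
    have h1 := hρS (c • z)
    have h2 : HasSum (fun i => ⟪u i, c • z⟫_ℂ * ⟪c • z, C (u i)⟫_ℂ) ((ρ z : ℂ)) := by
      convert hρS z using 2 with i
      rw [inner_smul_right, inner_smul_left]
      calc c * ⟪u i, z⟫_ℂ * ((starRingEnd ℂ) c * ⟪z, C (u i)⟫_ℂ)
          = (c * (starRingEnd ℂ) c) * (⟪u i, z⟫_ℂ * ⟪z, C (u i)⟫_ℂ) := by ring
        _ = ⟪u i, z⟫_ℂ * ⟪z, C (u i)⟫_ℂ := by rw [hc, one_mul]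
    exact_mod_cast h1.unique h2
  obtain ⟨E, hE, hsym⟩ : ∃ E : H → H → ℂ,
      (∀ z w, HasSum (fun i => ⟪u i, w⟫_ℂ * ⟪z, C (u i)⟫_ℂ) (E z w)) ∧
      (∀ z w, E w z = (starRingEnd ℂ) (E z w)) := by
    refine ⟨fun z w => (1/4 : ℂ) *
      (((ρ (z + w) : ℂ)) + I * (ρ ((I : ℂ) • z + w) : ℂ)
        - (ρ ((-1 : ℂ) • z + w) : ℂ) - I * (ρ ((-I : ℂ) • z + w) : ℂ)), ?_, ?_⟩
    · intro z w
      have h1 := hρS (z + w)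
      have h2 := hρS ((I : ℂ) • z + w)
      have h3 := hρS ((-1 : ℂ) • z + w)
      have h4 := hρS ((-I : ℂ) • z + w)
      have hc := (((h1.add (h2.mul_left I)).sub h3).sub (h4.mul_left I)).mul_left (1/4 : ℂ)
      convert hc using 2 with i
      · rfl
      · simp only [inner_add_left, inner_add_right, inner_smul_left, inner_smul_right,
          Complex.conj_I, map_neg, map_one]
        ring_nf
        rw [Complex.I_sq]
        ring
    · intro z w
      have e1 : ρ (w + z) = ρ (z + w) := by rw [add_comm]
      have e2 : ρ ((I : ℂ) • w + z) = ρ ((-I : ℂ) • z + w) := by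
        have h := hscale I (by simp [Complex.conj_I]) ((-I : ℂ) • z + w)
        rw [smul_add, smul_smul, mul_neg, Complex.I_mul_I, neg_neg, one_smul, add_comm] at h
        exact h
      have e3 : ρ ((-1 : ℂ) • w + z) = ρ ((-1 : ℂ) • z + w) := by
        have h := hscale (-1) (by simp) ((-1 : ℂ) • z + w)
        rw [smul_add, smul_smul, neg_mul, one_mul, neg_neg, one_smul, add_comm] at h
        exact h
      have e4 : ρ ((-I : ℂ) • w + z) = ρ ((I : ℂ) • z + w) := by
        have h := hscale (-I) (by simp [Complex.conj_I]) ((I : ℂ) • z + w)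
        rw [smul_add, smul_smul, neg_mul, Complex.I_mul_I, neg_neg, one_smul, add_comm] at h
        exact h
      simp only [e1, e2, e3, e4, map_mul, map_sub, map_add, map_one, Complex.conj_I,
        Complex.conj_ofReal, map_div₀, map_ofNat]
      ring
  have hdiag : ∀ z, E z z = (ρ z : ℂ) := fun z => (hE z z).unique (hρS z)
  have hconj : ∀ a : ℂ, (starRingEnd ℂ) a * a = ((‖a‖^2 : ℝ) : ℂ) := by
    intro a
    rw [mul_comm, Complex.mul_conj, Complex.normSq_eq_norm_sq]
  have haddL : ∀ z z' w, E (z + z') w = E z w + E z' w := by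
    intro z z' w
    refine (hE (z + z') w).unique ?_
    convert (hE z w).add (hE z' w) using 2 with i
    rw [inner_add_left]
    ring
  have hsmulL : ∀ (c : ℂ) z w, E (c • z) w = (starRingEnd ℂ) c * E z w := by
    intro c z w
    refine (hE (c • z) w).unique ?_
    convert (hE z w).mul_left ((starRingEnd ℂ) c) using 2 with i
    · rfl
    rw [inner_smul_left]
    ring
  have hsmulR : ∀ (c : ℂ) z w, E z (c • w) = c * E z w := by
    intro c z w
    refine (hE z (c • w)).unique ?_
    convert (hE z w).mul_left c using 2 with i
    · rfl
    rw [inner_smul_right]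
    ring
  have haddR : ∀ z w w', E z (w + w') = E z w + E z w' := by
    intro z w w'
    refine (hE z (w + w')).unique ?_
    convert (hE z w).add (hE z w') using 2 with i
    rw [inner_add_right]
    ring
  have hCS : ∀ z w, ‖E z w‖ ^ 2 ≤ ρ z * ρ w := by
    intro z w
    have key : ∀ s : ℝ, 0 ≤ ρ z - 2*s*‖E z w‖^2 + s^2*‖E z w‖^2*(ρ w) := by
      intro s
      set t : ℂ := (-s : ℂ) * (starRingEnd ℂ) (E z w) with htdef
      have expand : E (z + t • w) (z + t • w)
          = (ρ z : ℂ) + t * E z w + (starRingEnd ℂ) (t * E z w)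
            + t * (starRingEnd ℂ) t * (ρ w : ℂ) := by
        rw [haddL, haddR, haddR, hsmulL t w z, hsmulL t w (t • w), hsmulR t z w,
          hsmulR t w w, hdiag z, hdiag w, hsym z w]
        simp only [map_mul, map_neg, Complex.conj_conj, Complex.conj_ofReal]
        ring
      have hconjt : (starRingEnd ℂ) t = (-(s:ℂ)) * E z w := by
        rw [htdef]
        simp [map_mul, Complex.conj_conj, Complex.conj_ofReal]
      have h1 : t * E z w = ((-s * ‖E z w‖^2 : ℝ) : ℂ) := by
        rw [htdef, mul_assoc, hconj]
        push_cast
        ring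
      have h2 : t * (starRingEnd ℂ) t = ((s^2 * ‖E z w‖^2 : ℝ) : ℂ) := by
        calc t * (starRingEnd ℂ) t
            = ((s:ℂ) * (s:ℂ)) * ((starRingEnd ℂ) (E z w) * E z w) := by
              rw [htdef, hconjt]; ring
          _ = ((s^2 * ‖E z w‖^2 : ℝ) : ℂ) := by rw [hconj]; push_cast; ring
      have hreal : ((ρ (z + t • w) : ℝ) : ℂ)
          = ((ρ z - 2*s*‖E z w‖^2 + s^2*‖E z w‖^2*(ρ w) : ℝ) : ℂ) := by
        rw [← hdiag, expand, h1, h2, Complex.conj_ofReal]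
        push_cast
        ring
      have := hρ0 (z + t • w)
      have heq : ρ (z + t • w) = ρ z - 2*s*‖E z w‖^2 + s^2*‖E z w‖^2*(ρ w) :=
        Complex.ofReal_inj.mp hreal
      linarith
    by_cases hw : ρ w = 0
    · rw [hw, mul_zero]
      by_contra hpos
      push_neg at hpos
      have hk := key ((ρ z + 1)/‖E z w‖^2)
      rw [hw, mul_zero] at hk
      have hz := hρ0 z
      have hcc : ((ρ z + 1)/‖E z w‖^2) * ‖E z w‖^2 = ρ z + 1 :=
        div_mul_cancel₀ _ (ne_of_gt hpos)
      nlinarith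
    · have hw' : 0 < ρ w := (hρ0 w).lt_of_ne (Ne.symm hw)
      have hk := key (1/ρ w)
      have hne : ρ w ≠ 0 := ne_of_gt hw'
      have h := mul_nonneg hk hw'.le
      have h3 : (1/ρ w)^2 * ‖E z w‖^2 * ρ w * ρ w = ‖E z w‖^2 := by field_simp
      have h4 : (1/ρ w) * ‖E z w‖^2 * ρ w = ‖E z w‖^2 := by field_simp
      nlinarith [h, h3, h4]
  have hCsym : ∀ a b : H, ⟪C a, b⟫_ℂ = ⟪a, C b⟫_ℂ := fun a b => hC.1 a b
  have hCiapp : ∀ b : H, C (Cinv b) = b := by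
    intro b
    have := congrArg (fun T : H →L[ℂ] H => T b) hCr
    simpa using this
  have hCiapp' : ∀ b : H, Cinv (C b) = b := by
    intro b
    have := congrArg (fun T : H →L[ℂ] H => T b) hCl
    simpa using this
  have hCinvsym : ∀ a b : H, ⟪Cinv a, b⟫_ℂ = ⟪a, Cinv b⟫_ℂ := by
    intro a b
    calc ⟪Cinv a, b⟫_ℂ = ⟪Cinv a, C (Cinv b)⟫_ℂ := by rw [hCiapp]
      _ = ⟪C (Cinv a), Cinv b⟫_ℂ := (hCsym _ _).symm
      _ = ⟪a, Cinv b⟫_ℂ := by rw [hCiapp]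
  have hP : ∀ z w, HasSum (fun i => ⟪z, u i⟫_ℂ * ⟪u i, w⟫_ℂ) (E (Cinv z) w) := by
    intro z w
    convert hE (Cinv z) w using 2 with i
    rw [hCinvsym, hCiapp', mul_comm]
  have hA : ∀ z w, E (Cinv z) w = E z (Cinv w) := by
    intro z w
    have h2 : HasSum (fun i => ⟪z, u i⟫_ℂ * ⟪u i, w⟫_ℂ)
        ((starRingEnd ℂ) (E (Cinv w) z)) := by
      convert (hP w z).star using 2 with i
      simp only [star_mul', RCLike.star_def, inner_conj_symm]
      rw [mul_comm]
      rfl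
    rw [(hP z w).unique h2, ← hsym (Cinv w) z]
  have hAn : ∀ (m : ℕ) (z w : H), E ((Cinv ^ m) z) w = E z ((Cinv ^ m) w) := by
    intro m
    induction m with
    | zero => intro z w; simp
    | succ n ih =>
      intro z w
      calc E ((Cinv ^ (n+1)) z) w = E ((Cinv ^ n) (Cinv z)) w := by
            rw [pow_succ]; simp [ContinuousLinearMap.mul_apply]
        _ = E (Cinv z) ((Cinv ^ n) w) := ih _ _
        _ = E z (Cinv ((Cinv ^ n) w)) := hA _ _
        _ = E z ((Cinv ^ (n+1)) w) := by rw [pow_succ']; simp [ContinuousLinearMap.mul_apply]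
  have habs : ∀ t : ℝ, 0 ≤ t → ‖((t : ℝ) : ℂ)‖ = t := by
    intro t ht
    rw [Complex.norm_real]
    exact abs_of_nonneg ht
  have step : ∀ m : ℕ, (ρ ((Cinv ^ m) y))^2 ≤ ρ ((Cinv ^ m) ((Cinv ^ m) y)) * ρ y := by
    intro m
    have h := hCS ((Cinv ^ m) ((Cinv ^ m) y)) y
    have he : E ((Cinv ^ m) ((Cinv ^ m) y)) y = ((ρ ((Cinv ^ m) y) : ℝ) : ℂ) := by
      rw [hAn m ((Cinv ^ m) y) y]
      exact hdiag _
    rwa [he, habs _ (hρ0 _), ] at h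
  have epow : ∀ (t : ℝ) (n : ℕ), (t^(2^n))^2 = t^(2^(n+1)) := by
    intro t n
    rw [← pow_mul, pow_succ]
  have hPy := hP y y
  have hterm : (fun i => ⟪y, u i⟫_ℂ * ⟪u i, y⟫_ℂ)
      = fun i => ((‖⟪u i, y⟫_ℂ‖^2 : ℝ) : ℂ) := by
    funext i
    rw [← inner_conj_symm, hconj]
  set L := E (Cinv y) y with hL
  have hPy' : HasSum (fun i => ((‖⟪u i, y⟫_ℂ‖^2 : ℝ) : ℂ)) L := by
    rw [← hterm]; exact hPy
  have hre : HasSum (fun i => ‖⟪u i, y⟫_ℂ‖^2) L.re := by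
    have := hPy'.mapL Complex.reCLM
    simpa only [Complex.reCLM_apply, Complex.ofReal_re] using this
  have hre0 : 0 ≤ L.re := hre.nonneg (fun i => sq_nonneg _)
  have him : L.im = 0 := by
    have h0 : HasSum (fun _ : ℕ => (0:ℝ)) L.im := by
      simpa only [Complex.imCLM_apply, Complex.ofReal_im] using hPy'.mapL Complex.imCLM
    exact (h0.unique hasSum_zero)
  have hnormL : ‖L‖ = L.re := by
    have hLL : L = ((L.re : ℝ) : ℂ) := Complex.ext rfl (by simp [him])
    rw [hLL, Complex.ofReal_re, habs _ hre0]
  have hcs := hCS (Cinv y) y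
  by_cases hy0 : ρ y = 0
  · have hcs0 : ‖L‖^2 ≤ 0 := by rw [hy0, mul_zero] at hcs; exact hcs
    have hL0 : L.re ≤ 0 := by nlinarith [norm_nonneg L, hnormL]
    refine ⟨L.re, ρ y, hre, hρS y, hρ0 y, hρB y, ?_⟩
    rw [hy0, mul_zero]
    exact hL0
  · have hy' : 0 < ρ y := (hρ0 y).lt_of_ne (Ne.symm hy0)
    have chain : ∀ n : ℕ, (ρ (Cinv y))^(2^n) * ρ y ≤ ρ ((Cinv ^ (2^n)) y) * (ρ y)^(2^n) := by
      intro n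
      induction n with
      | zero => simp
      | succ n ih =>
        have h1 : 0 ≤ (ρ (Cinv y))^(2^n) * ρ y := mul_nonneg (pow_nonneg (hρ0 _) _) (hρ0 _)
        have st := step (2^n)
        have comp : (Cinv ^ (2^n)) ((Cinv ^ (2^n)) y) = (Cinv ^ (2^(n+1))) y := by
          rw [← ContinuousLinearMap.mul_apply, ← pow_add]
          congr 2
          omega
        rw [comp] at st
        have key2 : (ρ (Cinv y))^(2^(n+1)) * ρ y * ρ y
            ≤ ρ ((Cinv ^ (2^(n+1))) y) * (ρ y)^(2^(n+1)) * ρ y := by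
          calc (ρ (Cinv y))^(2^(n+1)) * ρ y * ρ y
              = ((ρ (Cinv y))^(2^n) * ρ y)^2 := by rw [← epow]; ring
            _ ≤ (ρ ((Cinv ^ (2^n)) y) * (ρ y)^(2^n))^2 := pow_le_pow_left₀ h1 ih 2
            _ = (ρ ((Cinv ^ (2^n)) y))^2 * (ρ y)^(2^(n+1)) := by rw [← epow]; ring
            _ ≤ (ρ ((Cinv ^ (2^(n+1))) y) * ρ y) * (ρ y)^(2^(n+1)) :=
                mul_le_mul_of_nonneg_right st (pow_nonneg (hρ0 _) _)
            _ = ρ ((Cinv ^ (2^(n+1))) y) * (ρ y)^(2^(n+1)) * ρ y := by ring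
        exact le_of_mul_le_mul_right key2 hy'
    have bound : ∀ n : ℕ, (ρ (Cinv y))^(2^n) * ρ y
        ≤ (Bu * ‖y‖^2) * (‖Cinv‖^2 * ρ y)^(2^n) := by
      intro n
      refine (chain n).trans ?_
      have h1 : ‖(Cinv ^ (2^n)) y‖ ≤ ‖Cinv‖^(2^n) * ‖y‖ :=
        (ContinuousLinearMap.le_opNorm _ _).trans
          (mul_le_mul_of_nonneg_right (norm_pow_le' Cinv (Nat.two_pow_pos n))
            (norm_nonneg y))
      have h2 : ‖(Cinv ^ (2^n)) y‖^2 ≤ (‖Cinv‖^(2^n))^2 * ‖y‖^2 := by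
        rw [← mul_pow]
        exact pow_le_pow_left₀ (norm_nonneg _) h1 2
      have hnn : ρ ((Cinv ^ (2^n)) y) ≤ Bu * ((‖Cinv‖^(2^n))^2 * ‖y‖^2) :=
        (hρB _).trans (mul_le_mul_of_nonneg_left h2 hBu)
      calc ρ ((Cinv ^ (2^n)) y) * (ρ y)^(2^n)
          ≤ (Bu * ((‖Cinv‖^(2^n))^2 * ‖y‖^2)) * (ρ y)^(2^n) :=
            mul_le_mul_of_nonneg_right hnn (pow_nonneg (hρ0 y) _)
        _ = (Bu * ‖y‖^2) * (‖Cinv‖^2 * ρ y)^(2^n) := by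
            rw [mul_pow, pow_right_comm]
            ring
    have hfin : ρ (Cinv y) ≤ ‖Cinv‖^2 * ρ y :=
      pow_limit_le (mul_nonneg (sq_nonneg _) (hρ0 y)) hy' bound
    have h5 : ‖L‖^2 ≤ (‖Cinv‖ * ρ y)^2 := by
      nlinarith [hcs, mul_le_mul_of_nonneg_right hfin hy'.le]
    have h6 : L.re ≤ ‖Cinv‖ * ρ y := by
      have hnn : 0 ≤ ‖Cinv‖ * ρ y := mul_nonneg (norm_nonneg _) (hρ0 y)
      nlinarith [hnormL, norm_nonneg L]
    exact ⟨L.re, ρ y, hre, hρS y, hρ0 y, hρB y, h6⟩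


/-- If `(f_i)` and `(g_i)` are `C`-controlled Bessel sequences (with `C`
positive and invertible), `B` is a controlled Bessel bound for `(g_i)`, and
`f = ∑_i ⟪f, f_i⟫ C g_i` for all `f`, then `(f_i)` satisfies the lower controlled-frame
inequality `∑_i ⟪f, f_i⟫⟪C f_i, f⟫ ≥ ‖f‖² / (B·‖C^{-1/2}‖⁴·‖C‖²)`; in particular it is a
`C`-controlled frame.  Here `R'` is the positive square root of `C⁻¹`; the paper's inner
product `⟪f, g⟫` (linear in the first argument) is Mathlib's `⟪g, f⟫_ℂ`. -/
theorem controlled_dual_lower_bound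
    {H : Type*} [NormedAddCommGroup H] [InnerProductSpace ℂ H] [CompleteSpace H]
    (C : H →L[ℂ] H) (hC : C.IsPositive)
    (Cinv : H →L[ℂ] H) (hCr : C ∘L Cinv = 1) (hCl : Cinv ∘L C = 1)
    (R' : H →L[ℂ] H) (hR' : R'.IsPositive) (hR'sq : R' ∘L R' = Cinv)
    (f g : ℕ → H) (Bf B : ℝ) (hBf : 0 < Bf) (hB : 0 < B)
    (hBesself : ∀ x : H, ∃ r : ℝ, 0 ≤ r ∧ r ≤ Bf * ‖x‖ ^ 2 ∧
      HasSum (fun i => ⟪f i, x⟫_ℂ * ⟪x, C (f i)⟫_ℂ) (r : ℂ))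
    (hBesselg : ∀ x : H, ∃ r : ℝ, 0 ≤ r ∧ r ≤ B * ‖x‖ ^ 2 ∧
      HasSum (fun i => ⟪g i, x⟫_ℂ * ⟪x, C (g i)⟫_ℂ) (r : ℂ))
    (hdual : ∀ x : H, HasSum (fun i => ⟪f i, x⟫_ℂ • C (g i)) x) :
    ∀ x : H, ∀ r : ℝ,
      HasSum (fun i => ⟪f i, x⟫_ℂ * ⟪x, C (f i)⟫_ℂ) (r : ℂ) →
      ‖x‖ ^ 2 / (B * ‖R'‖ ^ 4 * ‖C‖ ^ 2) ≤ r := by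
  intro x r hr
  obtain ⟨Sf, ρf, hSf, hρfS, hρf0, hρfB, hSfle⟩ :=
    controlled_master C hC Cinv hCr hCl f Bf hBf.le hBesself x
  have hrρ : r = ρf := by exact_mod_cast hr.unique hρfS
  have hr0 : 0 ≤ r := hrρ ▸ hρf0
  by_cases hx : x = 0
  · rw [hx]
    simp only [norm_zero, ne_eq, OfNat.ofNat_ne_zero, not_false_eq_true, zero_pow, zero_div]
    exact hr0
  · obtain ⟨Sg, ρg, hSg, hρgS, hρg0, hρgB, hSgle⟩ :=
      controlled_master C hC Cinv hCr hCl g B hB.le hBesselg (C x)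
    have hCsym : ∀ a b : H, ⟪C a, b⟫_ℂ = ⟪a, C b⟫_ℂ := fun a b => hC.1 a b
    have hdx : HasSum (fun i => ⟪f i, x⟫_ℂ * ⟪x, C (g i)⟫_ℂ) (⟪x, x⟫_ℂ) := by
      have := (hdual x).mapL (innerSL ℂ x)
      simpa [inner_smul_right] using this
    have hSg' : HasSum (fun i => ‖⟪x, C (g i)⟫_ℂ‖^2) Sg := by
      convert hSg using 2 with i
      rw [norm_inner_symm, hCsym]
    have hSf0 : 0 ≤ Sf := hSf.nonneg (fun i => sq_nonneg _)
    have hSg0 : 0 ≤ Sg := hSg.nonneg (fun i => sq_nonneg _)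
    have habsum : Summable (fun i => ‖⟪f i, x⟫_ℂ * ⟪x, C (g i)⟫_ℂ‖) := by
      refine Summable.of_nonneg_of_le (fun i => norm_nonneg _) (fun i => ?_)
        ((hSf.summable.add hSg'.summable).div_const 2)
      rw [norm_mul]
      nlinarith [sq_nonneg (‖⟪f i, x⟫_ℂ‖ - ‖⟪x, C (g i)⟫_ℂ‖)]
    have hxx : ‖⟪x, x⟫_ℂ‖ ≤ ∑' i, ‖⟪f i, x⟫_ℂ * ⟪x, C (g i)⟫_ℂ‖ := by
      rw [← hdx.tsum_eq]
      exact norm_tsum_le_tsum_norm habsum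
    have htsum_le : ∑' i, ‖⟪f i, x⟫_ℂ * ⟪x, C (g i)⟫_ℂ‖ ≤ Real.sqrt (Sf * Sg) := by
      refine Summable.tsum_le_of_sum_le habsum (fun F => ?_)
      have hnn : 0 ≤ ∑ i ∈ F, ‖⟪f i, x⟫_ℂ * ⟪x, C (g i)⟫_ℂ‖ :=
        Finset.sum_nonneg (fun i _ => norm_nonneg _)
      have h1 : (∑ i ∈ F, ‖⟪f i, x⟫_ℂ‖ * ‖⟪x, C (g i)⟫_ℂ‖)^2
          ≤ (∑ i ∈ F, ‖⟪f i, x⟫_ℂ‖^2) * (∑ i ∈ F, ‖⟪x, C (g i)⟫_ℂ‖^2) :=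
        Finset.sum_mul_sq_le_sq_mul_sq F _ _
      have h2 : ∑ i ∈ F, ‖⟪f i, x⟫_ℂ‖^2 ≤ Sf :=
        sum_le_hasSum F (fun i _ => sq_nonneg _) hSf
      have h3 : ∑ i ∈ F, ‖⟪x, C (g i)⟫_ℂ‖^2 ≤ Sg :=
        sum_le_hasSum F (fun i _ => sq_nonneg _) hSg'
      have h4 : (∑ i ∈ F, ‖⟪f i, x⟫_ℂ * ⟪x, C (g i)⟫_ℂ‖)^2 ≤ Sf * Sg := by
        simp only [norm_mul]
        refine h1.trans (mul_le_mul h2 h3 (Finset.sum_nonneg (fun i _ => sq_nonneg _)) hSf0)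
      calc ∑ i ∈ F, ‖⟪f i, x⟫_ℂ * ⟪x, C (g i)⟫_ℂ‖
          = Real.sqrt ((∑ i ∈ F, ‖⟪f i, x⟫_ℂ * ⟪x, C (g i)⟫_ℂ‖)^2) := (Real.sqrt_sq hnn).symm
        _ ≤ Real.sqrt (Sf * Sg) := Real.sqrt_le_sqrt h4
    have hxx2 : ‖⟪x, x⟫_ℂ‖^2 ≤ Sf * Sg := by
      have h := pow_le_pow_left₀ (norm_nonneg _) (hxx.trans htsum_le) 2
      rwa [Real.sq_sqrt (mul_nonneg hSf0 hSg0)] at h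
    have hx4 : (‖x‖^2) * (‖x‖^2) ≤ Sf * Sg := by
      have hnormxx : ‖⟪x, x⟫_ℂ‖ = ‖x‖^2 := by
        rw [inner_self_eq_norm_sq_to_K]
        simp [norm_pow, Complex.norm_real, abs_norm]
      rw [hnormxx] at hxx2
      nlinarith [hxx2]
    -- operator norm facts
    have hCiapp : C (Cinv x) = x := by
      have := congrArg (fun T : H →L[ℂ] H => T x) hCr
      simpa using this
    have hCiapp' : Cinv (C x) = x := by
      have := congrArg (fun T : H →L[ℂ] H => T x) hCl
      simpa using this
    have hCpos : 0 < ‖C‖ := by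
      rcases (norm_nonneg C).eq_or_lt with h | h
      · exfalso
        have hC0 : C = 0 := by rwa [eq_comm, norm_eq_zero] at h
        rw [hC0] at hCiapp
        exact hx (by simpa using hCiapp.symm)
      · exact h
    have hR'pos : 0 < ‖R'‖ := by
      rcases (norm_nonneg R').eq_or_lt with h | h
      · exfalso
        have hR0 : R' = 0 := by rwa [eq_comm, norm_eq_zero] at h
        have : Cinv = 0 := by rw [← hR'sq, hR0]; simp
        rw [this] at hCiapp'
        exact hx (by simpa using hCiapp'.symm)
      · exact h
    have hCinvR : ‖Cinv‖ ≤ ‖R'‖^2 := by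
      rw [← hR'sq, sq]
      exact ContinuousLinearMap.opNorm_comp_le R' R'
    have ha : Sf ≤ ‖R'‖^2 * r := by
      rw [hrρ]
      exact hSfle.trans (mul_le_mul_of_nonneg_right hCinvR hρf0)
    have hb : Sg ≤ ‖R'‖^2 * (B * (‖C‖^2 * ‖x‖^2)) := by
      refine hSgle.trans ?_
      have hCx2 : ‖C x‖^2 ≤ ‖C‖^2 * ‖x‖^2 := by
        rw [← mul_pow]
        exact pow_le_pow_left₀ (norm_nonneg _) (C.le_opNorm x) 2
      have h1 : ρg ≤ B * (‖C‖^2 * ‖x‖^2) :=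
        hρgB.trans (mul_le_mul_of_nonneg_left hCx2 hB.le)
      calc ‖Cinv‖ * ρg ≤ ‖Cinv‖ * (B * (‖C‖^2 * ‖x‖^2)) :=
            mul_le_mul_of_nonneg_left h1 (norm_nonneg _)
        _ ≤ ‖R'‖^2 * (B * (‖C‖^2 * ‖x‖^2)) :=
            mul_le_mul_of_nonneg_right hCinvR (by positivity)
    have hx2pos : 0 < ‖x‖^2 := pow_pos (norm_pos_iff.mpr hx) 2
    have hDpos : 0 < B * ‖R'‖ ^ 4 * ‖C‖ ^ 2 :=
      mul_pos (mul_pos hB (pow_pos hR'pos 4)) (pow_pos hCpos 2)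
    rw [div_le_iff₀ hDpos]
    have hfour : (‖x‖^2) * (‖x‖^2) ≤ (‖R'‖^2 * r) * (‖R'‖^2 * (B * (‖C‖^2 * ‖x‖^2))) :=
      hx4.trans (mul_le_mul ha hb hSg0 (by positivity))
    have hfour' : (‖x‖^2) * (‖x‖^2) ≤ (r * (B * ‖R'‖ ^ 4 * ‖C‖ ^ 2)) * (‖x‖^2) := by
      refine hfour.trans_eq ?_
      ring
    exact le_of_mul_le_mul_right hfour' hx2pos
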